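/- For t ≥ 0, k ≥ 0, δ > 0, let h(t) be the largest nonnegative solution y of (y² + t²)(y - kt) = (2/δ)ty. Then kt ≤ h(t) ≤ min{ kt + 1/δ, kt/2 + sqrt((kt/2)² + 2t/δ) } ≤ kt + min{ 1/δ, sqrt(2t/δ) }. -/
import Mathlib


/-- bounds on the largest nonnegative solution of the cubic (6.6). -/
theorem stmt_9 (k δ t : ℝ) (hk : 0 ≤ k) (hδ : 0 < δ) (ht : 0 ≤ t)
    (y : ℝ) (hy0 : 0 ≤ y)
    (hroot : (y ^ 2 + t ^ 2) * (y - k * t) = (2 / δ) * t * y)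
    (hmax : ∀ y' : ℝ, 0 ≤ y' →
      (y' ^ 2 + t ^ 2) * (y' - k * t) = (2 / δ) * t * y' → y' ≤ y) :
    k * t ≤ y ∧
    y ≤ min (k * t + 1 / δ)
        (k * t / 2 + Real.sqrt ((k * t / 2) ^ 2 + 2 * t / δ)) ∧
    min (k * t + 1 / δ)
        (k * t / 2 + Real.sqrt ((k * t / 2) ^ 2 + 2 * t / δ)) ≤
      k * t + min (1 / δ) (Real.sqrt (2 * t / δ)) := by
  have hδ0 : δ ≠ 0 := hδ.ne'
  have hroot' : δ * ((y ^ 2 + t ^ 2) * (y - k * t)) = 2 * t * y := by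
    have := hroot
    field_simp at this
    linarith [this]
  -- third conjunct, uniformly
  have hsub : Real.sqrt ((k * t / 2) ^ 2 + 2 * t / δ) ≤ k * t / 2 + Real.sqrt (2 * t / δ) := by
    have hc : 0 ≤ 2 * t / δ := by positivity
    have hs : Real.sqrt (2 * t / δ) ^ 2 = 2 * t / δ := Real.sq_sqrt hc
    have hle : (k * t / 2) ^ 2 + 2 * t / δ ≤ (k * t / 2 + Real.sqrt (2 * t / δ)) ^ 2 := by
      nlinarith [Real.sqrt_nonneg (2 * t / δ), mul_nonneg hk ht]
    calc Real.sqrt ((k * t / 2) ^ 2 + 2 * t / δ)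
        ≤ Real.sqrt ((k * t / 2 + Real.sqrt (2 * t / δ)) ^ 2) := Real.sqrt_le_sqrt hle
      _ = k * t / 2 + Real.sqrt (2 * t / δ) := Real.sqrt_sq (by positivity)
  have hthird : min (k * t + 1 / δ)
        (k * t / 2 + Real.sqrt ((k * t / 2) ^ 2 + 2 * t / δ)) ≤
      k * t + min (1 / δ) (Real.sqrt (2 * t / δ)) := by
    rw [← min_add_add_left]
    apply le_min
    · exact min_le_left _ _
    · calc min (k * t + 1 / δ) (k * t / 2 + Real.sqrt ((k * t / 2) ^ 2 + 2 * t / δ))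
          ≤ k * t / 2 + Real.sqrt ((k * t / 2) ^ 2 + 2 * t / δ) := min_le_right _ _
        _ ≤ k * t + Real.sqrt (2 * t / δ) := by linarith
  rcases eq_or_lt_of_le ht with ht0 | htpos
  · -- t = 0 case
    subst ht0
    have hy3 : y ^ 3 = 0 := by nlinarith [hroot]
    have hy : y = 0 := by
      have := pow_eq_zero_iff (n := 3) (by norm_num) |>.mp hy3
      exact this
    subst hy
    refine ⟨by simp, ?_, hthird⟩
    refine le_min (by positivity) ?_
    have : (0:ℝ) ≤ Real.sqrt ((k * 0 / 2) ^ 2 + 2 * 0 / δ) := Real.sqrt_nonneg _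
    simp
  · -- t > 0
    have hge : k * t ≤ y := by
      by_contra h
      push_neg at h
      have hd : 0 ≤ 2 / δ := by positivity
      nlinarith [mul_nonneg (mul_nonneg hd ht) hy0, sq_nonneg y, mul_pos htpos htpos]
    rcases eq_or_lt_of_le hy0 with hy0' | hypos
    · -- y = 0
      have hy := hy0'.symm
      subst hy
      refine ⟨hge, ?_, hthird⟩
      refine le_min (by positivity) ?_
      have : (0:ℝ) ≤ Real.sqrt ((k * t / 2) ^ 2 + 2 * t / δ) := Real.sqrt_nonneg _
      nlinarith [mul_nonneg hk ht]
    · -- y > 0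
      have h1 : y ≤ k * t + 1 / δ := by
        have key : δ * (y - k * t) ≤ 1 := by
          nlinarith [mul_pos htpos hypos, sq_nonneg (y - t),
            mul_nonneg (mul_nonneg hδ.le (sub_nonneg.2 hge)) (sq_nonneg (y - t))]
        have h' : y - k * t ≤ 1 / δ := by
          rw [le_div_iff₀ hδ]
          nlinarith [key]
        linarith
      have hsq : (y - k * t / 2) ^ 2 ≤ (k * t / 2) ^ 2 + 2 * t / δ := by
        have key : δ * (y * (y - k * t)) ≤ 2 * t := by
          nlinarith [hroot', mul_nonneg (mul_nonneg hδ.le (sub_nonneg.2 hge)) (sq_nonneg t),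
            hypos, mul_pos hypos htpos]
        have : y * (y - k * t) ≤ 2 * t / δ := by
          rw [le_div_iff₀ hδ]; nlinarith [key]
        nlinarith [this]
      have h2 : y ≤ k * t / 2 + Real.sqrt ((k * t / 2) ^ 2 + 2 * t / δ) := by
        have : y - k * t / 2 ≤ Real.sqrt ((k * t / 2) ^ 2 + 2 * t / δ) :=
          Real.le_sqrt_of_sq_le hsq
        linarith
      exact ⟨hge, le_min h1 h2, hthird⟩
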